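/- The LORD spending schedule α_k = γ_k β_0 + Σ_{j=1}^{|R_{k-1}|} γ_{k − t_j} β_{t_j}, where (γ_i) is nonnegative with Σ_{i=1}^∞ γ_i = 1, satisfies the wealth constraint: for all k ≥ 0, Σ_{i=1}^{k+1} α_i ≤ β_0 + Σ_{i=1}^k β_i R_i, i.e., W(k) − α_{k+1} ≥ 0. -/

import Mathlib

/-- The LORD spending schedule respects the GAI wealth constraint. -/
theorem lord_schedule_wealth
    (γ : ℕ → ℝ) (hγ0 : ∀ i, 1 ≤ i → 0 ≤ γ i)
    (hγsum : HasSum (fun i : ℕ => γ (i + 1)) 1)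
    (β : ℕ → ℝ) (hβ : ∀ i, 0 ≤ β i)
    (R : ℕ → ℕ) (hR : ∀ i, R i ≤ 1)
    (N : ℕ → ℕ) (hN : ∀ k, N k = ∑ i ∈ Finset.Icc 1 k, R i)
    (t : ℕ → ℕ) (ht0 : t 0 = 0) (htmono : StrictMono t)
    (htR : ∀ j, 1 ≤ j → R (t j) = 1)
    (htN : ∀ j, N (t j) = j)
    (hNt : ∀ k j, j ≤ N k → t j ≤ k)
    (α : ℕ → ℝ)
    (hα : ∀ k, 1 ≤ k → α k = γ k * β 0 +
        ∑ j ∈ Finset.Icc 1 (N (k - 1)), γ (k - t j) * β (t j)) :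
    ∀ k, (∑ i ∈ Finset.Icc 1 (k + 1), α i)
        ≤ β 0 + ∑ i ∈ Finset.Icc 1 k, β i * (R i : ℝ) := by
  intro k
  -- partial sums of γ are at most 1
  have hS : ∀ n : ℕ, ∑ i ∈ Finset.Icc 1 n, γ i ≤ 1 := by
    intro n
    have h1 : ∑ i ∈ Finset.Icc 1 n, γ i = ∑ i ∈ Finset.range n, γ (i + 1) := by
      rw [← Finset.Ico_add_one_right_eq_Icc, Finset.sum_Ico_eq_sum_range]
      exact Finset.sum_congr rfl (fun i _ => by rw [Nat.add_comm])
    rw [h1]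
    exact sum_le_hasSum _ (fun i _ => hγ0 (i + 1) (Nat.le_add_left 1 i)) hγsum
  have hNmono : Monotone N := by
    intro a b hab
    rw [hN a, hN b]
    exact Finset.sum_le_sum_of_subset (Finset.Icc_subset_Icc_right hab)
  have htle : ∀ j, j ≤ t j := fun j => htmono.le_apply
  -- rewrite the sum of α
  have hαsum : ∑ i ∈ Finset.Icc 1 (k + 1), α i
      = (∑ i ∈ Finset.Icc 1 (k + 1), γ i) * β 0
        + ∑ i ∈ Finset.Icc 1 (k + 1),
            ∑ j ∈ Finset.Icc 1 (N (i - 1)), γ (i - t j) * β (t j) := by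
    rw [Finset.sum_congr rfl (fun i hi => hα i (Finset.mem_Icc.mp hi).1),
      Finset.sum_add_distrib, Finset.sum_mul]
  rw [hαsum]
  have hβ0 : (∑ i ∈ Finset.Icc 1 (k + 1), γ i) * β 0 ≤ β 0 :=
    mul_le_of_le_one_left (hβ 0) (hS _)
  have hkey :
      ∑ i ∈ Finset.Icc 1 (k + 1), ∑ j ∈ Finset.Icc 1 (N (i - 1)),
          γ (i - t j) * β (t j)
        ≤ ∑ i ∈ Finset.Icc 1 k, β i * (R i : ℝ) := by
    -- step 1: express inner sum over a fixed index set with indicators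
    have hstep1 : ∀ i ∈ Finset.Icc 1 (k + 1),
        ∑ j ∈ Finset.Icc 1 (N (i - 1)), γ (i - t j) * β (t j)
          = ∑ j ∈ Finset.Icc 1 (N k),
              (if t j + 1 ≤ i then γ (i - t j) * β (t j) else 0) := by
      intro i hi
      obtain ⟨hi1, hik⟩ := Finset.mem_Icc.mp hi
      have hsub : Finset.Icc 1 (N (i - 1)) ⊆ Finset.Icc 1 (N k) :=
        Finset.Icc_subset_Icc_right (hNmono (by omega))
      rw [Finset.sum_congr rfl (g := fun j =>
          if t j + 1 ≤ i then γ (i - t j) * β (t j) else 0)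
        (fun j hj => by
          obtain ⟨hj1, hj2⟩ := Finset.mem_Icc.mp hj
          have h1 : t j ≤ i - 1 := hNt _ _ hj2
          exact (if_pos (show t j + 1 ≤ i by omega)).symm)]
      refine Finset.sum_subset hsub (fun j hj hnj => ?_)
      obtain ⟨hj1, hj2⟩ := Finset.mem_Icc.mp hj
      have hgt : N (i - 1) < j := by
        by_contra h
        exact hnj (Finset.mem_Icc.mpr ⟨hj1, by omega⟩)
      have : ¬ (t j + 1 ≤ i) := by
        intro hcon
        have : t j ≤ i - 1 := by omega
        have := htN j ▸ hNmono this
        omega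
      rw [if_neg this]
    rw [Finset.sum_congr rfl hstep1, Finset.sum_comm]
    -- step 2: each j contributes at most β (t j)
    have hstep2 : ∀ j ∈ Finset.Icc 1 (N k),
        ∑ i ∈ Finset.Icc 1 (k + 1),
            (if t j + 1 ≤ i then γ (i - t j) * β (t j) else 0)
          ≤ β (t j) := by
      intro j hj
      obtain ⟨hj1, hj2⟩ := Finset.mem_Icc.mp hj
      have hfil : Finset.filter (fun i => t j + 1 ≤ i) (Finset.Icc 1 (k + 1))
          = Finset.Icc (t j + 1) (k + 1) := by
        ext i
        simp only [Finset.mem_filter, Finset.mem_Icc]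
        omega
      rw [Finset.sum_ite, Finset.sum_const_zero, add_zero, hfil, ← Finset.sum_mul]
      have hre : ∑ i ∈ Finset.Icc (t j + 1) (k + 1), γ (i - t j)
          = ∑ m ∈ Finset.Icc 1 (k + 1 - t j), γ m := by
        rw [← Finset.Ico_add_one_right_eq_Icc, ← Finset.Ico_add_one_right_eq_Icc, Finset.sum_Ico_eq_sum_range,
          Finset.sum_Ico_eq_sum_range]
        refine Finset.sum_congr (by congr 1; omega) (fun i _ => by congr 1; omega)
      rw [hre]
      exact mul_le_of_le_one_left (hβ _) (hS _)
    calc ∑ j ∈ Finset.Icc 1 (N k), ∑ i ∈ Finset.Icc 1 (k + 1),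
            (if t j + 1 ≤ i then γ (i - t j) * β (t j) else 0)
        ≤ ∑ j ∈ Finset.Icc 1 (N k), β (t j) := Finset.sum_le_sum hstep2
      _ ≤ ∑ i ∈ Finset.Icc 1 k, β i * (R i : ℝ) := by
          rw [← Finset.sum_image (fun a _ b _ h => htmono.injective h)]
          have heq : ∀ i ∈ Finset.image t (Finset.Icc 1 (N k)),
              β i = β i * (R i : ℝ) := by
            intro i hi
            obtain ⟨j, hj, rfl⟩ := Finset.mem_image.mp hi
            obtain ⟨hj1, _⟩ := Finset.mem_Icc.mp hj
            rw [htR j hj1]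
            norm_num
          rw [Finset.sum_congr rfl heq]
          refine Finset.sum_le_sum_of_subset_of_nonneg ?_
            (fun i _ _ => mul_nonneg (hβ i) (Nat.cast_nonneg _))
          intro i hi
          obtain ⟨j, hj, rfl⟩ := Finset.mem_image.mp hi
          obtain ⟨hj1, hj2⟩ := Finset.mem_Icc.mp hj
          exact Finset.mem_Icc.mpr ⟨le_trans hj1 (htle j), hNt k j hj2⟩
  linarith
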